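/- Let n ≥ 2, fix r ∈ {1,…,n}, and let A = {x ∈ [0,1]^n : x_r = 0, or x_i = 1 for some i ∈ {1,…,n}}. Then the quotient space [0,1]^n / A, obtained by collapsing A to a single point, is contractible. -/

import Mathlib

/-- **Statement 10.** Let `n ≥ 2`, fix `r`, and let
`A = {x ∈ [0,1]^n : x_r = 0, or x_i = 1 for some i}`.  Then the quotient space
`[0,1]^n / A`, obtained by collapsing `A` to a single point (with the quotient
topology), is contractible. -/
theorem cube_quotient_contractible (n : ℕ) (hn : 2 ≤ n) (r : Fin n) :
    ContractibleSpace (Quot fun x y : Fin n → unitInterval =>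
      x = y ∨ ((x r = 0 ∨ ∃ i, x i = 1) ∧ (y r = 0 ∨ ∃ i, y i = 1))) := by
  set rel := fun x y : Fin n → unitInterval =>
      x = y ∨ ((x r = 0 ∨ ∃ i, x i = 1) ∧ (y r = 0 ∨ ∃ i, y i = 1)) with hrel
  have : Nontrivial (Fin n) := Fin.nontrivial_iff_two_le.mpr hn
  obtain ⟨j, hj⟩ := exists_ne r
  -- the deformation on the cube
  set step : (Fin n → unitInterval) → unitInterval → (Fin n → unitInterval) :=
    fun x t i => if i = j then max (x i) t else x i with hstep
  have hstepP : ∀ x t, (x r = 0 ∨ ∃ i, x i = 1) →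
      (step x t r = 0 ∨ ∃ i, step x t i = 1) := by
    intro x t hx
    rcases hx with h0 | ⟨i, hi⟩
    · left; simp [hstep, (hj.symm : r ≠ j), h0]
    · right; refine ⟨i, ?_⟩
      by_cases hij : i = j
      · subst hij
        simp only [hstep, if_pos rfl, hi]
        exact max_eq_left unitInterval.le_one'
      · simp [hstep, hij, hi]
  -- continuous map on cube × I
  have hcont : Continuous fun p : (Fin n → unitInterval) × unitInterval =>
      Quot.mk rel (step p.1 p.2) := by
    refine continuous_quot_mk.comp (continuous_pi fun i => ?_)
    by_cases hij : i = j
    · subst hij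
      simp only [hstep, if_pos rfl]
      exact ((continuous_apply i).comp continuous_fst).max continuous_snd
    · simp only [hstep, if_neg hij]
      exact (continuous_apply i).comp continuous_fst
  set K : C((Fin n → unitInterval) × unitInterval, Quot rel) := ⟨_, hcont⟩ with hK
  -- descend to the quotient via currying
  have hlift : ∀ x y, rel x y → K.curry x = K.curry y := by
    intro x y hxy
    rcases hxy with h | ⟨hx, hy⟩
    · rw [h]
    · ext t
      exact Quot.sound (Or.inr ⟨hstepP x t hx, hstepP y t hy⟩)
  set L : Quot rel → C(unitInterval, Quot rel) := Quot.lift K.curry hlift with hL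
  have hLcont : Continuous L := by
    rw [isQuotientMap_quot_mk.continuous_iff]
    exact K.curry.continuous
  set M : C(Quot rel, C(unitInterval, Quot rel)) := ⟨L, hLcont⟩ with hM
  have hH : Continuous fun p : unitInterval × Quot rel => L p.2 p.1 := by
    have := M.uncurry.continuous
    exact this.comp continuous_swap
  have hnull : (ContinuousMap.id (Quot rel)).Nullhomotopic := by
    refine ⟨Quot.mk rel (fun _ => 1), ⟨⟨⟨fun p => L p.2 p.1, hH⟩, ?_, ?_⟩⟩⟩
    · refine Quot.ind fun x => ?_
      simp only [ContinuousMap.coe_mk, ContinuousMap.id_apply]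
      rw [hL]
      show (K.curry x) 0 = Quot.mk rel x
      rw [ContinuousMap.curry_apply, hK]
      show Quot.mk rel (step x 0) = Quot.mk rel x
      congr 1
      funext i
      by_cases hij : i = j
      · simp [hstep, hij, max_eq_left (unitInterval.nonneg' : (0:unitInterval) ≤ x j)]
      · simp [hstep, hij]
    · refine Quot.ind fun x => ?_
      simp only [ContinuousMap.coe_mk, ContinuousMap.const_apply]
      rw [hL]
      show (K.curry x) 1 = Quot.mk rel (fun _ => 1)
      rw [ContinuousMap.curry_apply, hK]
      show Quot.mk rel (step x 1) = Quot.mk rel (fun _ => 1)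
      refine Quot.sound (Or.inr ⟨?_, Or.inr ⟨j, rfl⟩⟩)
      right
      exact ⟨j, by simp [hstep, max_eq_right (unitInterval.le_one' : x j ≤ 1)]⟩
  exact (contractible_iff_id_nullhomotopic _).mpr hnull
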